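/- For all integers L ≥ 0 and M ≥ L + 1, the identity i[N_{[−L,0]}, H_{[−M,M+1]}] = j_{0,1} − j_{−L−1,−L} holds. (In contrast, for L ≥ M ≥ 1 the same commutator equals j_{0,1}; this is the algebraic reason why the two limits L → ∞ and M → ∞ in Lemma 2 cannot be interchanged.) -/

import Mathlib

lemma int_Icc_insert (a b : ℤ) (h : a ≤ b + 1) :
    Finset.Icc a (b + 1) = insert (b + 1) (Finset.Icc a b) := by
  ext x; simp [Finset.mem_Icc]; omega

lemma telescope_Icc {A : Type*} [AddCommGroup A] (f : ℤ → A) (a b : ℤ) (hab : a ≤ b) :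
    ∑ x ∈ Finset.Icc a b, (f x - f (x - 1)) = f b - f (a - 1) := by
  refine Int.le_induction (motive := fun b _ => ∑ x ∈ Finset.Icc a b, (f x - f (x - 1)) = f b - f (a - 1)) ?_ ?_ b hab
  · simp
  · intro b hb ih
    rw [int_Icc_insert a b (by omega), Finset.sum_insert (by simp), ih]
    have hb1 : b + 1 - 1 = b := by ring
    rw [hb1]; abel

/-- For integers `L ≥ 0` and `M ≥ L + 1`,
`i[N_{[-L,0]}, H_{[-M,M+1]}] = j_{0,1} - j_{-L-1,-L}`. -/
theorem commutator_charge_hamiltonian_large_M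
    (A : Type*) [Ring A] [Algebra ℂ A]
    (n h : ℤ → A)
    (hloc : ∀ x y : ℤ, x ≠ y → x ≠ y + 1 → n x * h y - h y * n x = 0)
    (hcons : ∀ y : ℤ, (n y + n (y + 1)) * h y - h y * (n y + n (y + 1)) = 0)
    (L M : ℤ) (hL : 0 ≤ L) (hM : L + 1 ≤ M) :
    Complex.I • ((∑ x ∈ Finset.Icc (-L) 0, n x) * (∑ y ∈ Finset.Icc (-M) M, h y)
        - (∑ y ∈ Finset.Icc (-M) M, h y) * (∑ x ∈ Finset.Icc (-L) 0, n x))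
      = Complex.I • (n 0 * h 0 - h 0 * n 0)
        - Complex.I • (n (-L - 1) * h (-L - 1) - h (-L - 1) * n (-L - 1)) := by
  set c : ℤ → ℤ → A := fun x y => n x * h y - h y * n x with hc
  have key : (∑ x ∈ Finset.Icc (-L) 0, n x) * (∑ y ∈ Finset.Icc (-M) M, h y)
        - (∑ y ∈ Finset.Icc (-M) M, h y) * (∑ x ∈ Finset.Icc (-L) 0, n x)
      = ∑ x ∈ Finset.Icc (-L) 0, ∑ y ∈ Finset.Icc (-M) M, c x y := by
    rw [Finset.sum_mul, Finset.mul_sum]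
    rw [← Finset.sum_sub_distrib]
    refine Finset.sum_congr rfl fun x _ => ?_
    rw [Finset.mul_sum, Finset.sum_mul, ← Finset.sum_sub_distrib]
  have inner : ∀ x ∈ Finset.Icc (-L) 0,
      ∑ y ∈ Finset.Icc (-M) M, c x y = c x x - c (x - 1) (x - 1) := by
    intro x hx
    simp only [Finset.mem_Icc] at hx
    have hsub : ({x - 1, x} : Finset ℤ) ⊆ Finset.Icc (-M) M := by
      intro y hy; simp at hy; simp [Finset.mem_Icc]; omega
    rw [← Finset.sum_subset hsub (fun y _ hy => by
      simp at hy
      exact hloc x y (by omega) (by omega))]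
    rw [Finset.sum_pair (by omega)]
    have h1 := hcons (x - 1)
    have h2 : x - 1 + 1 = x := by ring
    rw [h2] at h1
    have hz : c x (x - 1) + c (x - 1) (x - 1) = 0 := by
      simp only [hc]
      rw [add_mul, mul_add] at h1
      abel_nf at h1 ⊢
      exact h1
    have hcx : c x (x - 1) = -c (x - 1) (x - 1) := eq_neg_of_add_eq_zero_left hz
    rw [hcx]; abel
  rw [key, Finset.sum_congr rfl inner,
    telescope_Icc (fun x => c x x) (-L) 0 (by omega)]
  simp only [hc]
  rw [smul_sub]
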